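/- Let Γ be a duplication forest for a network G and let θ₁, θ₂ be two duplicate sequences compatible with Γ. Then the seed graphs G₀^{θ₁} and G₀^{θ₂} have the same number of edges, and consequently the total edge gain along the two histories is equal: δ(θ₁) + e(θ₁) = δ(θ₂) + e(θ₂). -/

import Mathlib

open scoped Classical

universe u

variable {V : Type u}

/-- The merge (backward) operator `R_v^u(G)`: contract duplicate `v` into anchor `u`.
Vertex `v` becomes isolated (representing its removal from the vertex set). -/
def mergeG (G : SimpleGraph V) (u v : V) : SimpleGraph V where
  Adj x y := x ≠ y ∧ x ≠ v ∧ y ≠ v ∧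
    (G.Adj x y ∨ (x = u ∧ G.Adj v y) ∨ (y = u ∧ G.Adj v x))
  symm := by
    constructor
    rintro x y ⟨h1, h2, h3, h4⟩
    refine ⟨h1.symm, h3, h2, ?_⟩
    rcases h4 with h | ⟨a, b⟩ | ⟨a, b⟩
    · exact Or.inl h.symm
    · exact Or.inr (Or.inr ⟨a, b⟩)
    · exact Or.inr (Or.inl ⟨a, b⟩)
  loopless := by constructor; rintro x ⟨h, _⟩; exact h rfl

/-- δ(v): 1 if the duplicate `v` is adjacent to its anchor `u`. -/
noncomputable def deltaI (G : SimpleGraph V) (u v : V) : ℕ :=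
  if G.Adj u v then 1 else 0

/-- e(v): number of common neighbours of anchor `u` and duplicate `v`. -/
noncomputable def extI [Fintype V] (G : SimpleGraph V) (u v : V) : ℕ :=
  (G.neighborFinset u ∩ G.neighborFinset v).card

/-- ℓ(v): number of vertices (other than `u`, `v`) adjacent to exactly one of `u`, `v`. -/
noncomputable def lossI [Fintype V] (G : SimpleGraph V) (u v : V) : ℕ :=
  (((G.neighborFinset u ∪ G.neighborFinset v) \
      (G.neighborFinset u ∩ G.neighborFinset v)) \ {u, v}).card

/-- Apply the merge operators backward along a list of (anchor, duplicate) pairs. -/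
noncomputable def graphAfter (G : SimpleGraph V) (steps : List (V × V)) : SimpleGraph V :=
  steps.foldl (fun g p => mergeG g p.1 p.2) G

noncomputable def deltaNum : SimpleGraph V → List (V × V) → ℕ
  | _, [] => 0
  | G, s :: rest => deltaI G s.1 s.2 + deltaNum (mergeG G s.1 s.2) rest

noncomputable def extNum [Fintype V] : SimpleGraph V → List (V × V) → ℕ
  | _, [] => 0
  | G, s :: rest => extI G s.1 s.2 + extNum (mergeG G s.1 s.2) rest

noncomputable def lossNum [Fintype V] : SimpleGraph V → List (V × V) → ℕ
  | _, [] => 0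
  | G, s :: rest => lossI G s.1 s.2 + lossNum (mergeG G s.1 s.2) rest

/-- The likelihood of a (backward) history: product of one-step DMC transition
probabilities `p_c^{δ_i} p^{e_i} q^{ℓ_i}` with `q = (1-p)/2`. -/
noncomputable def likelihood [Fintype V] (pc p : ℝ) : SimpleGraph V → List (V × V) → ℝ
  | _, [] => 1
  | G, s :: rest =>
      pc ^ deltaI G s.1 s.2 * p ^ extI G s.1 s.2 * ((1 - p) / 2) ^ lossI G s.1 s.2 *
        likelihood pc p (mergeG G s.1 s.2) rest

/-- Rooted binary trees. -/
inductive BTree (V : Type u) : Type u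
  | leaf : V → BTree V
  | node : BTree V → BTree V → BTree V

def BTree.leaves : BTree V → List V
  | .leaf v => [v]
  | .node l r => l.leaves ++ r.leaves

/-- A duplication forest: a list of rooted binary trees. -/
abbrev Forest (V : Type u) := List (BTree V)

def Forest.leaves (Γ : Forest V) : List V := Γ.flatMap BTree.leaves

/-- Replace the cherry `{u, v}` of a tree by the single leaf `u`. -/
inductive ReplaceCherry : BTree V → V → V → BTree V → Prop
  | base_left (u v : V) : ReplaceCherry (.node (.leaf u) (.leaf v)) u v (.leaf u)
  | base_right (u v : V) : ReplaceCherry (.node (.leaf v) (.leaf u)) u v (.leaf u)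
  | left {l l' r : BTree V} {u v : V} :
      ReplaceCherry l u v l' → ReplaceCherry (.node l r) u v (.node l' r)
  | right {l r r' : BTree V} {u v : V} :
      ReplaceCherry r u v r' → ReplaceCherry (.node l r) u v (.node l r')

/-- One backward step on a duplication forest: replace the cherry `{u,v}` in one tree. -/
inductive ForestStep : Forest V → V → V → Forest V → Prop
  | head {t t' : BTree V} {ts : Forest V} {u v : V} :
      ReplaceCherry t u v t' → ForestStep (t :: ts) u v (t' :: ts)
  | tail {t : BTree V} {ts ts' : Forest V} {u v : V} :
      ForestStep ts u v ts' → ForestStep (t :: ts) u v (t :: ts')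

/-- `FUnfold Γ steps Γ₀`: the (anchor, duplicate) list `steps`, processed backward in time,
is compatible with the duplication forest `Γ` and reduces it to `Γ₀`. -/
inductive FUnfold : Forest V → List (V × V) → Forest V → Prop
  | nil (Γ : Forest V) : FUnfold Γ [] Γ
  | cons {Γ Γ' Γ₀ : Forest V} {u v : V} {steps : List (V × V)} :
      ForestStep Γ u v Γ' → FUnfold Γ' steps Γ₀ → FUnfold Γ ((u, v) :: steps) Γ₀

/-- A forest consisting only of isolated leaves (duplication forest of a seed graph). -/
def IsSeed (Γ : Forest V) : Prop := ∀ t ∈ Γ, ∃ v, t = BTree.leaf v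
section EdgeCount

open Finset

variable [Fintype V]

lemma edge_card_merge (H : SimpleGraph V) (u v : V) :
    H.edgeFinset.card = (mergeG H u v).edgeFinset.card + deltaI H u v + extI H u v := by
  classical
  set D : Finset V := H.neighborFinset v \ insert u (H.neighborFinset u) with hD
  set C : Finset (Sym2 V) := D.image (fun y => s(u, y)) with hC
  set B : Finset (Sym2 V) := H.edgeFinset.filter (fun e => v ∉ e) with hB
  have hnotu : ∀ y ∈ D, y ≠ u ∧ ¬ H.Adj u y ∧ H.Adj v y := by
    intro y hy
    rw [hD, Finset.mem_sdiff, Finset.mem_insert, SimpleGraph.mem_neighborFinset] at hy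
    push_neg at hy
    rw [SimpleGraph.mem_neighborFinset] at hy
    exact ⟨hy.2.1, hy.2.2, hy.1⟩
  -- merged edge set
  have hME : (mergeG H u v).edgeFinset = B ∪ C := by
    ext e
    induction e with
    | _ x y =>
      simp only [SimpleGraph.mem_edgeFinset, SimpleGraph.mem_edgeSet, Finset.mem_union]
      constructor
      · rintro ⟨hxy, hxv, hyv, hcase⟩
        rcases hcase with h | ⟨rfl, hvy⟩ | ⟨rfl, hvx⟩
        · left
          rw [hB, Finset.mem_filter]
          refine ⟨by simpa [SimpleGraph.mem_edgeFinset] using h, ?_⟩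
          simp only [Sym2.mem_iff]
          rintro (rfl | rfl) <;> simp_all
        · by_cases hA : H.Adj x y
          · left
            rw [hB, Finset.mem_filter]
            refine ⟨by simpa [SimpleGraph.mem_edgeFinset] using hA, ?_⟩
            simp only [Sym2.mem_iff]
            rintro (rfl | rfl) <;> simp_all
          · right
            rw [hC, Finset.mem_image]
            refine ⟨y, ?_, rfl⟩
            rw [hD, Finset.mem_sdiff, Finset.mem_insert]
            push_neg
            rw [SimpleGraph.mem_neighborFinset, SimpleGraph.mem_neighborFinset]
            exact ⟨hvy, fun h => hxy h.symm, hA⟩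
        · by_cases hA : H.Adj x y
          · left
            rw [hB, Finset.mem_filter]
            refine ⟨by simpa [SimpleGraph.mem_edgeFinset] using hA, ?_⟩
            simp only [Sym2.mem_iff]
            rintro (rfl | rfl) <;> simp_all
          · right
            rw [hC, Finset.mem_image]
            refine ⟨x, ?_, Sym2.eq_swap⟩
            rw [hD, Finset.mem_sdiff, Finset.mem_insert]
            push_neg
            rw [SimpleGraph.mem_neighborFinset, SimpleGraph.mem_neighborFinset]
            exact ⟨hvx, fun h => hxy h, fun h => hA h.symm⟩
      · rintro (hb | hc)
        · rw [hB, Finset.mem_filter] at hb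
          obtain ⟨he, hv⟩ := hb
          rw [SimpleGraph.mem_edgeFinset, SimpleGraph.mem_edgeSet] at he
          simp only [Sym2.mem_iff] at hv
          push_neg at hv
          exact ⟨he.ne, fun h => hv.1 h.symm, fun h => hv.2 h.symm, Or.inl he⟩
        · rw [hC, Finset.mem_image] at hc
          obtain ⟨y', hy', heq⟩ := hc
          obtain ⟨hy'u, hy'nadj, hy'adj⟩ := hnotu y' hy'
          have huv : u ≠ v := by
            rintro rfl
            exact hy'nadj (hy'adj)
          rw [Sym2.eq_iff] at heq
          rcases heq with ⟨rfl, rfl⟩ | ⟨rfl, rfl⟩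
          · exact ⟨fun h => hy'u h.symm, huv, hy'adj.ne', Or.inr (Or.inl ⟨rfl, hy'adj⟩)⟩
          · exact ⟨hy'u, hy'adj.ne', huv, Or.inr (Or.inr ⟨rfl, hy'adj⟩)⟩
  have hdisj : Disjoint B C := by
    rw [Finset.disjoint_left]
    intro e heB heC
    rw [hC, Finset.mem_image] at heC
    obtain ⟨y', hy', rfl⟩ := heC
    obtain ⟨_, hy'nadj, _⟩ := hnotu y' hy'
    rw [hB, Finset.mem_filter, SimpleGraph.mem_edgeFinset, SimpleGraph.mem_edgeSet] at heB
    exact hy'nadj heB.1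
  have hCcard : C.card = D.card := by
    rw [hC]
    apply Finset.card_image_of_injOn
    intro y hy y' hy' hEq
    rw [Sym2.eq_iff] at hEq
    rcases hEq with ⟨-, h⟩ | ⟨h1, h2⟩
    · exact h
    · exact absurd h1.symm (hnotu y' hy').1
  have hEH : H.edgeFinset.card = H.degree v + B.card := by
    have := Finset.card_filter_add_card_filter_not
      (s := H.edgeFinset) (p := fun e => v ∈ e)
    rw [← this, ← SimpleGraph.incidenceFinset_eq_filter, SimpleGraph.card_incidenceFinset_eq_degree]
  have hdeg : H.degree v = extI H u v + deltaI H u v + D.card := by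
    have h1 : (H.neighborFinset v ∩ insert u (H.neighborFinset u)).card + D.card
        = H.degree v := by
      rw [hD]
      exact Finset.card_inter_add_card_sdiff _ _
    have h2 : (H.neighborFinset v ∩ insert u (H.neighborFinset u)).card
        = extI H u v + deltaI H u v := by
      by_cases hA : H.Adj u v
      · have huv : H.neighborFinset v ∩ insert u (H.neighborFinset u)
            = insert u (H.neighborFinset v ∩ H.neighborFinset u) := by
          ext w
          simp only [Finset.mem_inter, Finset.mem_insert, SimpleGraph.mem_neighborFinset]
          constructor
          · rintro ⟨h1, h2 | h2⟩
            · exact Or.inl h2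
            · exact Or.inr ⟨h1, h2⟩
          · rintro (rfl | ⟨h1, h2⟩)
            · exact ⟨hA.symm, Or.inl rfl⟩
            · exact ⟨h1, Or.inr h2⟩
        rw [huv, Finset.card_insert_of_notMem, extI, deltaI, if_pos hA, Finset.inter_comm]
        simp [SimpleGraph.mem_neighborFinset]
      · have huv : H.neighborFinset v ∩ insert u (H.neighborFinset u)
            = H.neighborFinset v ∩ H.neighborFinset u := by
          ext w
          simp only [Finset.mem_inter, Finset.mem_insert, SimpleGraph.mem_neighborFinset]
          constructor
          · rintro ⟨h1, h2 | h2⟩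
            · exact absurd (h2 ▸ h1).symm hA
            · exact ⟨h1, h2⟩
          · rintro ⟨h1, h2⟩
            exact ⟨h1, Or.inr h2⟩
        rw [huv, extI, deltaI, if_neg hA, Finset.inter_comm]
        simp
    omega
  have hcard : (mergeG H u v).edgeFinset.card = B.card + C.card := by
    rw [hME, Finset.card_union_of_disjoint hdisj]
  rw [hcard, hCcard, hEH, hdeg]
  omega

end EdgeCount

lemma edge_card_graphAfter [Fintype V] (H : SimpleGraph V) (s : List (V × V)) :
    H.edgeFinset.card = (graphAfter H s).edgeFinset.card + deltaNum H s + extNum H s := by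
  induction s generalizing H with
  | nil => simp [graphAfter, deltaNum, extNum]; exact congrArg Finset.card (Finset.ext fun e => SimpleGraph.mem_edgeFinset.trans SimpleGraph.mem_edgeFinset.symm)
  | cons p rest ih =>
    have h0 : graphAfter H (p :: rest) = graphAfter (mergeG H p.1 p.2) rest := rfl
    rw [h0, deltaNum, extNum, edge_card_merge H p.1 p.2, ih (mergeG H p.1 p.2)]
    omega

section Forests

lemma BTree.leaves_ne_nil (t : BTree V) : t.leaves ≠ [] := by
  induction t with
  | leaf v => simp [BTree.leaves]
  | node l r ihl ihr => simp_all [BTree.leaves]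

@[simp] lemma Forest.leaves_cons (t : BTree V) (ts : Forest V) :
    Forest.leaves (t :: ts) = t.leaves ++ Forest.leaves ts := by
  simp [Forest.leaves]

lemma mem_forest_leaves {x : V} {Γ : Forest V} :
    x ∈ Forest.leaves Γ ↔ ∃ t ∈ Γ, x ∈ t.leaves := by
  simp [Forest.leaves]

lemma ReplaceCherry.perm {t t' : BTree V} {u v : V} (h : ReplaceCherry t u v t') :
    List.Perm t.leaves (v :: t'.leaves) := by
  induction h with
  | base_left u v => exact List.Perm.swap v u []
  | base_right u v => exact List.Perm.refl _
  | left h ih => simpa [BTree.leaves] using ih.append_right _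
  | right h ih =>
    simp only [BTree.leaves]
    exact (ih.append_left _).trans (List.perm_middle)

lemma ReplaceCherry.mem_u {t t' : BTree V} {u v : V} (h : ReplaceCherry t u v t') :
    u ∈ t'.leaves := by
  induction h with
  | base_left u v => simp [BTree.leaves]
  | base_right u v => simp [BTree.leaves]
  | left h ih => simp [BTree.leaves, ih]
  | right h ih => simp [BTree.leaves, ih]

lemma ForestStep.perm {Γ Γ' : Forest V} {u v : V} (h : ForestStep Γ u v Γ') :
    List.Perm (Forest.leaves Γ) (v :: Forest.leaves Γ') := by
  induction h with
  | head hrc =>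
    simpa using hrc.perm.append_right _
  | tail hstep ih =>
    simp only [Forest.leaves_cons]
    exact (ih.append_left _).trans (List.perm_middle)

lemma ForestStep.mem_u {Γ Γ' : Forest V} {u v : V} (h : ForestStep Γ u v Γ') :
    u ∈ Forest.leaves Γ' := by
  induction h with
  | head hrc => simp [hrc.mem_u]
  | tail hstep ih => simp [ih]

def SameTree (Γ : Forest V) (a b : V) : Prop :=
  ∃ t ∈ Γ, a ∈ t.leaves ∧ b ∈ t.leaves

lemma ForestStep.sametree {Γ Γ' : Forest V} {u v : V} (h : ForestStep Γ u v Γ') :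
    SameTree Γ u v := by
  induction h with
  | head hrc =>
    refine ⟨_, List.mem_cons_self, ?_, ?_⟩
    · exact hrc.perm.mem_iff.mpr (List.mem_cons_of_mem _ hrc.mem_u)
    · exact hrc.perm.mem_iff.mpr (List.mem_cons_self)
  | tail hstep ih =>
    obtain ⟨t, ht, h1, h2⟩ := ih
    exact ⟨t, List.mem_cons_of_mem _ ht, h1, h2⟩

lemma forall2_sub_refl (Γ : Forest V) :
    List.Forall₂ (fun a b : BTree V => b.leaves ⊆ a.leaves) Γ Γ := by
  induction Γ with
  | nil => exact List.Forall₂.nil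
  | cons s Γs ih => exact List.Forall₂.cons (fun x hx => hx) ih

lemma ForestStep.forall2 {Γ Γ' : Forest V} {u v : V} (h : ForestStep Γ u v Γ') :
    List.Forall₂ (fun a b => b.leaves ⊆ a.leaves) Γ Γ' := by
  induction h with
  | head hrc =>
    refine List.Forall₂.cons ?_ (forall2_sub_refl _)
    intro x hx
    exact hrc.perm.mem_iff.mpr (List.mem_cons_of_mem _ hx)
  | tail hstep ih => exact List.Forall₂.cons (fun x hx => hx) ih

lemma forall2_sub_trans {Γ Γ' Γ'' : Forest V}
    (h1 : List.Forall₂ (fun a b => b.leaves ⊆ a.leaves) Γ Γ')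
    (h2 : List.Forall₂ (fun a b => b.leaves ⊆ a.leaves) Γ' Γ'') :
    List.Forall₂ (fun a b => b.leaves ⊆ a.leaves) Γ Γ'' := by
  induction h1 generalizing Γ'' with
  | nil => cases h2; exact List.Forall₂.nil
  | cons hab h ih =>
    cases h2 with
    | cons hbc h' => exact List.Forall₂.cons (fun x hx => hab (hbc hx)) (ih h')

lemma sametree_mono {Γ Γ' : Forest V}
    (h : List.Forall₂ (fun a b => b.leaves ⊆ a.leaves) Γ Γ') {a b : V}
    (hs : SameTree Γ' a b) : SameTree Γ a b := by
  obtain ⟨t', ht', h1, h2⟩ := hs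
  induction h with
  | nil => simp at ht'
  | cons hab hrest ih =>
    rcases List.mem_cons.1 ht' with rfl | ht'
    · exact ⟨_, List.mem_cons_self, hab h1, hab h2⟩
    · obtain ⟨t, ht, g1, g2⟩ := ih ht'
      exact ⟨t, List.mem_cons_of_mem _ ht, g1, g2⟩

lemma tree_unique {Γ : Forest V} (hnd : (Forest.leaves Γ).Nodup) {t t' : BTree V}
    (ht : t ∈ Γ) (ht' : t' ∈ Γ) {a : V} (ha : a ∈ t.leaves) (ha' : a ∈ t'.leaves) :
    t = t' := by
  induction Γ with
  | nil => simp at ht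
  | cons s Γs ih =>
    rw [Forest.leaves_cons, List.nodup_append] at hnd
    obtain ⟨h1, h2, h3⟩ := hnd
    rcases List.mem_cons.1 ht with h4 | h4
    · rcases List.mem_cons.1 ht' with h5 | h5
      · rw [h4, h5]
      · rw [h4] at ha
        have hmem : a ∈ Forest.leaves Γs := mem_forest_leaves.2 ⟨t', h5, ha'⟩
        exact absurd rfl (h3 a ha a hmem)
    · rcases List.mem_cons.1 ht' with h5 | h5
      · rw [h5] at ha'
        have hmem : a ∈ Forest.leaves Γs := mem_forest_leaves.2 ⟨t, h4, ha⟩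
        exact absurd rfl (h3 a ha' a hmem)
      · exact ih h2 h4 h5

lemma sametree_symm {Γ : Forest V} {a b : V} (h : SameTree Γ a b) : SameTree Γ b a := by
  obtain ⟨t, ht, h1, h2⟩ := h
  exact ⟨t, ht, h2, h1⟩

lemma sametree_trans {Γ : Forest V} (hnd : (Forest.leaves Γ).Nodup) {a b c : V}
    (h1 : SameTree Γ a b) (h2 : SameTree Γ b c) : SameTree Γ a c := by
  obtain ⟨t, ht, ha, hb⟩ := h1
  obtain ⟨t', ht', hb', hc⟩ := h2
  exact ⟨t, ht, ha, (tree_unique hnd ht ht' hb hb') ▸ hc⟩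

lemma forest_nodup {Γ : Forest V} (hnd : (Forest.leaves Γ).Nodup) : Γ.Nodup := by
  induction Γ with
  | nil => exact List.nodup_nil
  | cons s Γs ih =>
    rw [Forest.leaves_cons, List.nodup_append] at hnd
    obtain ⟨h1, h2, h3⟩ := hnd
    refine List.Nodup.cons ?_ (ih h2)
    intro hs
    obtain ⟨x, hx⟩ := List.exists_mem_of_ne_nil _ (BTree.leaves_ne_nil s)
    exact h3 x hx x (mem_forest_leaves.2 ⟨s, hs, hx⟩) rfl

lemma seed_leaves_length {Γ : Forest V} (hseed : IsSeed Γ) :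
    (Forest.leaves Γ).length = Γ.length := by
  induction Γ with
  | nil => simp [Forest.leaves]
  | cons s Γs ih =>
    obtain ⟨w, rfl⟩ := hseed s (List.mem_cons_self)
    have h0 := ih fun t ht => hseed t (List.mem_cons_of_mem _ ht)
    rw [Forest.leaves_cons]
    show ((BTree.leaf w).leaves ++ Forest.leaves Γs).length = Γs.length + 1
    rw [List.length_append, h0]
    show [w].length + Γs.length = Γs.length + 1
    simp [Nat.add_comm]

end Forests

section Rep

/-- `σ` represents `H` as a quotient-with-representatives of `G`. -/
def RepBy (G : SimpleGraph V) (σ : V → V) (H : SimpleGraph V) : Prop :=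
  ∀ x y, H.Adj x y ↔ ∃ a b, σ a = x ∧ σ b = y ∧ x ≠ y ∧ G.Adj a b

lemma repBy_merge {G H : SimpleGraph V} {σ : V → V} {u v : V} (huv : u ≠ v)
    (hrep : RepBy G σ H) :
    RepBy G (fun a => if σ a = v then u else σ a) (mergeG H u v) := by
  intro x y
  constructor
  · rintro ⟨hxy, hxv, hyv, hcase⟩
    rcases hcase with h | ⟨rfl, hvy⟩ | ⟨rfl, hvx⟩
    · obtain ⟨a, b, ha, hb, -, hab⟩ := (hrep x y).1 h
      exact ⟨a, b, by simp [ha, hxv], by simp [hb, hyv], hxy, hab⟩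
    · obtain ⟨a, b, ha, hb, -, hab⟩ := (hrep v y).1 hvy
      exact ⟨a, b, by simp [ha], by simp [hb, hyv], hxy, hab⟩
    · obtain ⟨a, b, ha, hb, -, hab⟩ := (hrep v x).1 hvx
      exact ⟨b, a, by simp [hb, hxv], by simp [ha], hxy, hab.symm⟩
  · rintro ⟨a, b, ha, hb, hxy, hab⟩
    simp only at ha hb
    by_cases hav : σ a = v
    · rw [if_pos hav] at ha
      by_cases hbv : σ b = v
      · rw [if_pos hbv] at hb
        exact absurd (ha.symm.trans hb) hxy
      · rw [if_neg hbv] at hb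
        subst ha hb
        refine ⟨hxy, huv, hbv, Or.inr (Or.inl ⟨rfl, ?_⟩)⟩
        exact (hrep v (σ b)).2 ⟨a, b, hav, rfl, fun h => hbv h.symm, hab⟩
    · rw [if_neg hav] at ha
      by_cases hbv : σ b = v
      · rw [if_pos hbv] at hb
        subst ha hb
        refine ⟨hxy, hav, huv, Or.inr (Or.inr ⟨rfl, ?_⟩)⟩
        exact (hrep v (σ a)).2 ⟨b, a, hbv, rfl, fun h => hav h.symm, hab.symm⟩
      · rw [if_neg hbv] at hb
        subst ha hb
        exact ⟨hxy, hav, hbv, Or.inl ((hrep _ _).2 ⟨a, b, rfl, rfl, hxy, hab⟩)⟩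

/-- The grand invariant carried along an unfolding. -/
lemma main_invariant (G : SimpleGraph V) (Γ : Forest V)
    (hnd : (Forest.leaves Γ).Nodup) (hall : ∀ x : V, x ∈ Forest.leaves Γ) :
    ∀ {Γ' : Forest V} {steps : List (V × V)} {Γ₀ : Forest V}, FUnfold Γ' steps Γ₀ →
    ∀ (H : SimpleGraph V) (σ : V → V),
      (Forest.leaves Γ').Nodup →
      List.Forall₂ (fun a b => b.leaves ⊆ a.leaves) Γ Γ' →
      RepBy G σ H →
      (∀ a b, σ a = σ b → SameTree Γ a b) →
      (∀ a, SameTree Γ a (σ a)) →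
      (∀ a, σ a ∈ Forest.leaves Γ') →
    ∃ τ : V → V,
      RepBy G τ (graphAfter H steps) ∧
      (∀ a b, τ a = τ b → SameTree Γ a b) ∧
      (∀ a, SameTree Γ a (τ a)) ∧
      (∀ a, τ a ∈ Forest.leaves Γ₀) ∧
      (Forest.leaves Γ₀).Nodup ∧
      List.Forall₂ (fun a b => b.leaves ⊆ a.leaves) Γ Γ₀ := by
  intro Γ' steps Γ₀ hunf
  induction hunf with
  | nil Γ' =>
    intro H σ h1 h2 h3 h4 h5 h6
    exact ⟨σ, h3, h4, h5, h6, h1, h2⟩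
  | @cons Γ' Γ'' Γ₀ u v steps hstep hrest ih =>
    intro H σ h1 h2 h3 h4 h5 h6
    have hperm := hstep.perm
    have hnd'' : (v :: Forest.leaves Γ'').Nodup := hperm.nodup_iff.mp h1
    have hvnot : v ∉ Forest.leaves Γ'' := (List.nodup_cons.1 hnd'').1
    have hnd2 : (Forest.leaves Γ'').Nodup := (List.nodup_cons.1 hnd'').2
    have humem : u ∈ Forest.leaves Γ'' := hstep.mem_u
    have huv : u ≠ v := by rintro rfl; exact hvnot humem
    have hsuv : SameTree Γ u v := sametree_mono h2 hstep.sametree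
    have h2' : List.Forall₂ (fun a b => b.leaves ⊆ a.leaves) Γ Γ'' :=
      forall2_sub_trans h2 hstep.forall2
    set σ' : V → V := fun a => if σ a = v then u else σ a with hσ'
    have hrep' : RepBy G σ' (mergeG H u v) := repBy_merge huv h3
    have h4' : ∀ a b, σ' a = σ' b → SameTree Γ a b := by
      intro a b hab
      rw [hσ'] at hab
      simp only at hab
      by_cases hav : σ a = v <;> by_cases hbv : σ b = v
      · exact h4 a b (hav.trans hbv.symm)
      · rw [if_pos hav, if_neg hbv] at hab
        -- σ a = v, σ b = u : a ~ v ~ u ~ b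
        have h1' : SameTree Γ a v := hav ▸ h5 a
        have h2'' : SameTree Γ b u := by rw [hab]; exact h5 b
        exact sametree_trans hnd (sametree_trans hnd h1' (sametree_symm hsuv))
          (sametree_symm h2'')
      · rw [if_neg hav, if_pos hbv] at hab
        have h1' : SameTree Γ b v := hbv ▸ h5 b
        have h2'' : SameTree Γ a u := hab ▸ h5 a
        exact sametree_trans hnd (sametree_trans hnd h2'' hsuv)
          (sametree_symm h1')
      · rw [if_neg hav, if_neg hbv] at hab
        exact h4 a b hab
    have h5' : ∀ a, SameTree Γ a (σ' a) := by
      intro a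
      rw [hσ']
      simp only
      by_cases hav : σ a = v
      · rw [if_pos hav]
        exact sametree_trans hnd (hav ▸ h5 a) (sametree_symm hsuv)
      · rw [if_neg hav]
        exact h5 a
    have h6' : ∀ a, σ' a ∈ Forest.leaves Γ'' := by
      intro a
      rw [hσ']
      simp only
      by_cases hav : σ a = v
      · rw [if_pos hav]; exact humem
      · rw [if_neg hav]
        have := hperm.mem_iff.mp (h6 a)
        rcases List.mem_cons.1 this with h | h
        · exact absurd h hav
        · exact h
    have hGA : graphAfter H ((u, v) :: steps) = graphAfter (mergeG H u v) steps := rfl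
    rw [hGA]
    exact ih (mergeG H u v) σ' hnd2 h2' hrep' h4' h5' h6'

end Rep

section Fiber

/-- At a seed forest, the fibers of the representative map are exactly
the leaf-sets of the trees of `Γ`. -/
lemma fiber_iff [Fintype V] (Γ Γ₀ : Forest V)
    (hnd : (Forest.leaves Γ).Nodup) (hall : ∀ x : V, x ∈ Forest.leaves Γ)
    (hseed : IsSeed Γ₀) (hnd₀ : (Forest.leaves Γ₀).Nodup) (hlen : Γ.length = Γ₀.length)
    (σ : V → V)
    (hfib : ∀ a b, σ a = σ b → SameTree Γ a b)
    (hself : ∀ a, SameTree Γ a (σ a))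
    (hrange : ∀ a, σ a ∈ Forest.leaves Γ₀) :
    ∀ a b, σ a = σ b ↔ SameTree Γ a b := by
  classical
  have hex : ∀ x : V, ∃ t, t ∈ Γ ∧ x ∈ t.leaves := by
    intro x
    obtain ⟨t, ht, hx⟩ := mem_forest_leaves.1 (hall x)
    exact ⟨t, ht, hx⟩
  set f : V → BTree V := fun x => Classical.choose (hex x) with hf
  have hfspec : ∀ x : V, f x ∈ Γ ∧ x ∈ (f x).leaves := fun x => Classical.choose_spec (hex x)
  have hfeq : ∀ (x : V) (t : BTree V), t ∈ Γ → x ∈ t.leaves → f x = t := by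
    intro x t ht hx
    exact tree_unique hnd (hfspec x).1 ht (hfspec x).2 hx
  have hfsame : ∀ a b, SameTree Γ a b → f a = f b := by
    rintro a b ⟨t, ht, ha, hb⟩
    rw [hfeq a t ht ha, hfeq b t ht hb]
  have hfσ : ∀ a, f (σ a) = f a := by
    intro a
    exact (hfsame a (σ a) (hself a)).symm
  set s : Finset V := Finset.univ.image σ with hs
  set t : Finset (BTree V) := Γ.toFinset with hts
  have hmaps : ∀ x ∈ s, f x ∈ t := by
    intro x _
    rw [hts, List.mem_toFinset]
    exact (hfspec x).1
  have hsurj : ∀ tr ∈ t, ∃ x, ∃ hx : x ∈ s, f x = tr := by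
    intro tr htr
    rw [hts, List.mem_toFinset] at htr
    obtain ⟨a, ha⟩ := List.exists_mem_of_ne_nil _ (BTree.leaves_ne_nil tr)
    refine ⟨σ a, Finset.mem_image_of_mem σ (Finset.mem_univ a), ?_⟩
    rw [hfσ a, hfeq a tr htr ha]
  have hcard : s.card ≤ t.card := by
    have h1 : s ⊆ (Forest.leaves Γ₀).toFinset := by
      intro x hx
      rw [hs, Finset.mem_image] at hx
      obtain ⟨a, -, rfl⟩ := hx
      rw [List.mem_toFinset]
      exact hrange a
    have h2 : s.card ≤ (Forest.leaves Γ₀).length := by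
      calc s.card ≤ (Forest.leaves Γ₀).toFinset.card := Finset.card_le_card h1
        _ = (Forest.leaves Γ₀).length := List.toFinset_card_of_nodup hnd₀
    have h3 : t.card = Γ.length := by
      rw [hts, List.toFinset_card_of_nodup (forest_nodup hnd)]
    rw [h3, hlen, ← seed_leaves_length hseed]
    exact h2
  have hinj := Finset.inj_on_of_surj_on_of_card_le (fun x _ => f x)
    (fun x hx => hmaps x hx) (fun b hb => hsurj b hb) hcard
  intro a b
  constructor
  · exact hfib a b
  · intro hsame
    have h1 : f (σ a) = f (σ b) := by
      rw [hfσ a, hfσ b]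
      exact hfsame a b hsame
    exact hinj (Finset.mem_image_of_mem σ (Finset.mem_univ a))
      (Finset.mem_image_of_mem σ (Finset.mem_univ b)) h1

/-- Two representative maps with the same fibers give graphs with equal edge counts. -/
lemma edge_card_eq_of_reps [Fintype V] (G H₁ H₂ : SimpleGraph V) (σ₁ σ₂ : V → V)
    (r₁ : RepBy G σ₁ H₁) (r₂ : RepBy G σ₂ H₂)
    (hc : ∀ a b, σ₁ a = σ₁ b ↔ σ₂ a = σ₂ b) :
    H₁.edgeFinset.card = H₂.edgeFinset.card := by
  classical
  cases isEmpty_or_nonempty V with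
  | inl hemp =>
    have : IsEmpty (Sym2 V) := by
      constructor
      intro e
      exact Sym2.ind (fun x _ => isEmptyElim x) e
    rw [Finset.eq_empty_of_isEmpty H₁.edgeFinset, Finset.eq_empty_of_isEmpty H₂.edgeFinset]
  | inr hne =>
    set g : V → V := fun x => σ₂ (Function.invFun σ₁ x) with hg
    have hkey : ∀ a, g (σ₁ a) = σ₂ a := by
      intro a
      rw [hg]
      exact (hc _ _).1 (Function.invFun_eq ⟨a, rfl⟩)
    have hginj : ∀ a b, g (σ₁ a) = g (σ₁ b) → σ₁ a = σ₁ b := by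
      intro a b h
      rw [hkey a, hkey b] at h
      exact (hc a b).2 h
    refine Finset.card_bij (fun e _ => Sym2.map g e) ?_ ?_ ?_
    · intro e he
      induction e with
      | _ x y =>
        rw [SimpleGraph.mem_edgeFinset, SimpleGraph.mem_edgeSet] at he
        obtain ⟨a, b, rfl, rfl, hxy, hab⟩ := (r₁ _ _).1 he
        show Sym2.map g s(σ₁ a, σ₁ b) ∈ H₂.edgeFinset
        rw [Sym2.map_pair_eq, hkey a, hkey b, SimpleGraph.mem_edgeFinset,
          SimpleGraph.mem_edgeSet]
        refine (r₂ _ _).2 ⟨a, b, rfl, rfl, ?_, hab⟩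
        intro h
        exact hxy ((hc a b).2 h)
    · intro e₁ he₁ e₂ he₂ heq
      induction e₁ with
      | _ x₁ y₁ =>
        induction e₂ with
        | _ x₂ y₂ =>
          rw [SimpleGraph.mem_edgeFinset, SimpleGraph.mem_edgeSet] at he₁ he₂
          obtain ⟨a₁, b₁, rfl, rfl, hxy₁, hab₁⟩ := (r₁ _ _).1 he₁
          obtain ⟨a₂, b₂, rfl, rfl, hxy₂, hab₂⟩ := (r₁ _ _).1 he₂
          have heq' : Sym2.map g s(σ₁ a₁, σ₁ b₁) = Sym2.map g s(σ₁ a₂, σ₁ b₂) := heq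
          rw [Sym2.map_pair_eq, Sym2.map_pair_eq, Sym2.eq_iff] at heq'
          rw [Sym2.eq_iff]
          rcases heq' with ⟨p, q⟩ | ⟨p, q⟩
          · exact Or.inl ⟨hginj _ _ p, hginj _ _ q⟩
          · exact Or.inr ⟨hginj _ _ p, hginj _ _ q⟩
    · intro e he
      induction e with
      | _ x y =>
        rw [SimpleGraph.mem_edgeFinset, SimpleGraph.mem_edgeSet] at he
        obtain ⟨a, b, rfl, rfl, hxy, hab⟩ := (r₂ _ _).1 he
        have hne' : σ₁ a ≠ σ₁ b := fun h => hxy ((hc a b).1 h)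
        refine ⟨s(σ₁ a, σ₁ b), ?_, ?_⟩
        · rw [SimpleGraph.mem_edgeFinset, SimpleGraph.mem_edgeSet]
          exact (r₁ _ _).2 ⟨a, b, rfl, rfl, hne', hab⟩
        · show Sym2.map g s(σ₁ a, σ₁ b) = s(σ₂ a, σ₂ b)
          rw [Sym2.map_pair_eq, hkey a, hkey b]

end Fiber

/-- for two duplicate sequences compatible with the duplication forest
`Γ`, the seed graphs have the same number of edges, and consequently the total edge
gain along the two histories is equal: `δ(θ₁) + e(θ₁) = δ(θ₂) + e(θ₂)`. -/
theorem stmt19 [Fintype V] (G : SimpleGraph V) (Γ : Forest V)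
    (hnd : (Forest.leaves Γ).Nodup) (hall : ∀ x : V, x ∈ Forest.leaves Γ)
    (s₁ s₂ : List (V × V)) (Γ₁ Γ₂ : Forest V)
    (h₁ : FUnfold Γ s₁ Γ₁) (hseed₁ : IsSeed Γ₁)
    (h₂ : FUnfold Γ s₂ Γ₂) (hseed₂ : IsSeed Γ₂) :
    (graphAfter G s₁).edgeFinset.card = (graphAfter G s₂).edgeFinset.card ∧
      deltaNum G s₁ + extNum G s₁ = deltaNum G s₂ + extNum G s₂ := by
  classical
  have key : ∀ (s : List (V × V)) (Γ₀ : Forest V), FUnfold Γ s Γ₀ → IsSeed Γ₀ →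
      ∃ τ : V → V, RepBy G τ (graphAfter G s) ∧ (∀ a b, τ a = τ b ↔ SameTree Γ a b) := by
    intro s Γ₀ hunf hseed
    have hrep0 : RepBy G id G := by
      intro x y
      constructor
      · intro h; exact ⟨x, y, rfl, rfl, h.ne, h⟩
      · rintro ⟨a, b, rfl, rfl, hxy, hab⟩; exact hab
    have hst : ∀ a : V, SameTree Γ a a := by
      intro a
      obtain ⟨t, ht, hx⟩ := mem_forest_leaves.1 (hall a)
      exact ⟨t, ht, hx, hx⟩
    obtain ⟨τ, h3, h4, h5, h6, h7, h8⟩ := main_invariant G Γ hnd hall hunf G id hnd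
      (forall2_sub_refl Γ) hrep0 (fun a b h => (show a = b from h) ▸ hst a) (fun a => hst a) (fun a => hall a)
    have hlen : Γ.length = Γ₀.length := h8.length_eq
    exact ⟨τ, h3, fiber_iff Γ Γ₀ hnd hall hseed h7 hlen τ h4 h5 h6⟩
  obtain ⟨τ₁, r₁, f₁⟩ := key s₁ Γ₁ h₁ hseed₁
  obtain ⟨τ₂, r₂, f₂⟩ := key s₂ Γ₂ h₂ hseed₂
  have hc : ∀ a b, τ₁ a = τ₁ b ↔ τ₂ a = τ₂ b := fun a b => (f₁ a b).trans (f₂ a b).symm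
  have hE := edge_card_eq_of_reps G _ _ τ₁ τ₂ r₁ r₂ hc
  refine ⟨hE, ?_⟩
  have e1 := edge_card_graphAfter G s₁
  have e2 := edge_card_graphAfter G s₂
  omega
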